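/- Let N ≥ 2, let φ : (0,∞) → (0,∞) satisfy (φ₁) and (φ₂), Φ(t) = ∫₀^{|t|} τφ(τ) dτ, and assume Φ satisfies the Δ₂-condition: there exists K > 1 with Φ(2t) ≤ KΦ(t) for all t ≥ 0. Define Ψ(t) = ∫₀^{|t|} (∫_{𝕊^{N−1}} Φ(ρ|z_N|) dS_z) dρ/ρ. Then Ψ is an N-function equivalent to Φ: there exist constants k₁, k₂ > 0 such that k₁ Φ(t) ≤ Ψ(t) ≤ k₂ Φ(t) for all t > 0. -/

import Mathlib

open MeasureTheory Filter Set
open scoped NNReal ENNReal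

private lemma ESnormsq (m : ℕ) (x : EuclideanSpace ℝ (Fin m)) :
    ‖x‖^2 = ∑ i, (x i)^2 := by
  rw [EuclideanSpace.norm_eq, Real.sq_sqrt (by positivity)]
  simp [Real.norm_eq_abs, sq_abs]

private lemma ESdistsq (m : ℕ) (x y : EuclideanSpace ℝ (Fin m)) :
    dist x y ^ 2 = ∑ i, dist (x i) (y i) ^ 2 := by
  rw [EuclideanSpace.dist_eq, Real.sq_sqrt (by positivity)]

private lemma hm_pi_eq_vol (m : ℕ) :
    (μH[(m:ℝ)] : Measure (Fin m → ℝ)) = volume := by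
  have h := MeasureTheory.hausdorffMeasure_pi_real (ι := Fin m)
  rwa [Fintype.card_fin] at h

private lemma vol_le_hm (m : ℕ) (s : Set (EuclideanSpace ℝ (Fin m))) :
    volume ((WithLp.equiv 2 (Fin m → ℝ)) '' s) ≤ μH[(m:ℝ)] s := by
  have h := (PiLp.lipschitzWith_ofLp 2 (fun _ : Fin m => ℝ)).hausdorffMeasure_image_le
    (d := (m:ℝ)) (Nat.cast_nonneg m) s
  rw [hm_pi_eq_vol m] at h
  simpa using h

private lemma hm_le_vol (m : ℕ) : ∃ C : ℝ≥0∞, C < ⊤ ∧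
    ∀ s : Set (EuclideanSpace ℝ (Fin m)),
      μH[(m:ℝ)] s ≤ C * volume ((WithLp.equiv 2 (Fin m → ℝ)) '' s) := by
  have hanti := PiLp.antilipschitzWith_ofLp 2 (fun _ : Fin m => ℝ)
  have hsymm : LipschitzWith ((Fintype.card (Fin m) : ℝ≥0) ^ ((1:ℝ≥0∞)/2).toReal)
      (WithLp.equiv 2 (Fin m → ℝ)).symm :=
    hanti.to_rightInverse (fun x => (WithLp.equiv 2 (Fin m → ℝ)).apply_symm_apply x)
  refine ⟨((Fintype.card (Fin m) : ℝ≥0) ^ ((1:ℝ≥0∞)/2).toReal : ℝ≥0) ^ (m:ℝ), ?_, ?_⟩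
  · exact ENNReal.rpow_lt_top_of_nonneg (Nat.cast_nonneg m) ENNReal.coe_ne_top
  · intro s
    have h := hsymm.hausdorffMeasure_image_le (d := (m:ℝ)) (Nat.cast_nonneg m)
      ((WithLp.equiv 2 (Fin m → ℝ)) '' s)
    rwa [Equiv.symm_image_image, hm_pi_eq_vol m] at h

private lemma equiv_image_closedBall_subset (m : ℕ) (R : ℝ) :
    (WithLp.equiv 2 (Fin m → ℝ)) '' (Metric.closedBall (0 : EuclideanSpace ℝ (Fin m)) R) ⊆
      Metric.closedBall (0 : Fin m → ℝ) R := by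
  rintro y ⟨x, hx, rfl⟩
  rw [Metric.mem_closedBall] at hx ⊢
  have h := (PiLp.lipschitzWith_ofLp 2 (fun _ : Fin m => ℝ)).dist_le_mul x 0
  rw [WithLp.ofLp_zero] at h
  simpa using h.trans (by simpa using hx)

private lemma hm_closedBall_lt_top (m : ℕ) (R : ℝ) :
    μH[(m:ℝ)] (Metric.closedBall (0 : EuclideanSpace ℝ (Fin m)) R) < ⊤ := by
  obtain ⟨C, hC, hle⟩ := hm_le_vol m
  refine lt_of_le_of_lt (hle _) ?_
  refine ENNReal.mul_lt_top hC ?_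
  refine (measure_mono (equiv_image_closedBall_subset m R)).trans_lt ?_
  exact measure_closedBall_lt_top

private lemma hm_closedBall_pos (m : ℕ) (R : ℝ) (hR : 0 < R) :
    0 < μH[(m:ℝ)] (Metric.closedBall (0 : EuclideanSpace ℝ (Fin m)) R) := by
  refine lt_of_lt_of_le ?_ (vol_le_hm m _)
  have hsub : Metric.closedBall (0 : Fin m → ℝ) (R / ((m:ℝ)+1)) ⊆
      (WithLp.equiv 2 (Fin m → ℝ)) '' (Metric.closedBall (0 : EuclideanSpace ℝ (Fin m)) R) := by
    intro y hy
    rw [Metric.mem_closedBall] at hy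
    refine ⟨(WithLp.equiv 2 (Fin m → ℝ)).symm y, ?_, by simp⟩
    rw [Metric.mem_closedBall]
    have hanti := PiLp.antilipschitzWith_ofLp 2 (fun _ : Fin m => ℝ)
    have h := hanti.le_mul_dist ((WithLp.equiv 2 (Fin m → ℝ)).symm y)
      ((WithLp.equiv 2 (Fin m → ℝ)).symm 0)
    change dist ((WithLp.equiv 2 (Fin m → ℝ)).symm y) ((WithLp.equiv 2 (Fin m → ℝ)).symm 0) ≤ _ * dist y 0 at h
    have hsymm0 : (WithLp.equiv 2 (Fin m → ℝ)).symm (0 : Fin m → ℝ) = 0 := by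
      rfl
    rw [hsymm0] at h
    refine h.trans ?_
    have h12 : ((1:ℝ≥0∞)/2).toReal = 1/2 := by
      rw [ENNReal.toReal_div]; norm_num
    have hKR : ((((Fintype.card (Fin m) : ℝ≥0)) ^ ((1:ℝ≥0∞)/2).toReal : ℝ≥0) : ℝ) ≤ (m:ℝ)+1 := by
      rw [NNReal.coe_rpow, h12, Fintype.card_fin, ← Real.sqrt_eq_rpow]
      have h1 : Real.sqrt m ≤ Real.sqrt (((m:ℝ)+1)^2) :=
        Real.sqrt_le_sqrt (by push_cast; nlinarith [Nat.cast_nonneg (α := ℝ) m])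
      rwa [Real.sqrt_sq (by positivity)] at h1
    calc ((((Fintype.card (Fin m) : ℝ≥0)) ^ ((1:ℝ≥0∞)/2).toReal : ℝ≥0) : ℝ) * dist y 0
        ≤ ((m:ℝ)+1) * (R/((m:ℝ)+1)) := mul_le_mul hKR hy dist_nonneg (by positivity)
      _ = R := by field_simp
  refine lt_of_lt_of_le ?_ (measure_mono hsub)
  exact Metric.measure_closedBall_pos volume _ (by positivity)

private lemma cap_hm_pos (M : ℕ) (hM : 1 ≤ M) :
    0 < μH[(M:ℝ)] {z : EuclideanSpace ℝ (Fin (M+1)) |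
      z ∈ Metric.sphere (0 : EuclideanSpace ℝ (Fin (M+1))) 1 ∧ 1/2 ≤ |z (Fin.last M)|} := by
  set cap : Set (EuclideanSpace ℝ (Fin (M+1))) :=
    {z : EuclideanSpace ℝ (Fin (M+1)) |
      z ∈ Metric.sphere (0 : EuclideanSpace ℝ (Fin (M+1))) 1 ∧ 1/2 ≤ |z (Fin.last M)|}
    with hcap
  set π : EuclideanSpace ℝ (Fin (M+1)) → EuclideanSpace ℝ (Fin M) :=
    fun z => WithLp.toLp 2 (fun k => z k.castSucc : Fin M → ℝ) with hπdef
  have hπ : LipschitzWith 1 π := by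
    apply LipschitzWith.of_dist_le_mul
    intro x y
    simp only [NNReal.coe_one, one_mul]
    have h1 : dist (π x) (π y) ^ 2 ≤ dist x y ^ 2 := by
      rw [ESdistsq, ESdistsq, Fin.sum_univ_castSucc (f := fun j => dist (x j) (y j) ^ 2)]
      have h2 : ∑ k : Fin M, dist (π x k) (π y k) ^ 2
          = ∑ k : Fin M, dist (x k.castSucc) (y k.castSucc) ^ 2 := rfl
      rw [h2]
      have h3 : (0:ℝ) ≤ dist (x (Fin.last M)) (y (Fin.last M)) ^ 2 := sq_nonneg _
      linarith
    nlinarith [dist_nonneg (x := π x) (y := π y), dist_nonneg (x := x) (y := y)]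
  have hsub : Metric.closedBall (0 : EuclideanSpace ℝ (Fin M)) (1/2) ⊆ π '' cap := by
    intro x hx
    rw [Metric.mem_closedBall, dist_zero_right] at hx
    have hx0 : (0:ℝ) ≤ ‖x‖ := norm_nonneg x
    have hx2 : ‖x‖^2 ≤ 1/4 := by nlinarith
    set r : ℝ := Real.sqrt (1 - ‖x‖^2) with hr
    have hr2 : r^2 = 1 - ‖x‖^2 := Real.sq_sqrt (by nlinarith)
    have hrge : 1/2 ≤ r := by
      rw [hr, show (1:ℝ)/2 = Real.sqrt ((1/2)^2) by
        rw [Real.sqrt_sq (by norm_num)]]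
      exact Real.sqrt_le_sqrt (by nlinarith)
    set z : EuclideanSpace ℝ (Fin (M+1)) := WithLp.toLp 2 (Fin.snoc (α := fun _ => ℝ) x.ofLp r) with hz
    have hzc : ∀ k : Fin M, z k.castSucc = x k := fun k => Fin.snoc_castSucc (α := fun _ => ℝ) r x.ofLp k
    have hzl : z (Fin.last M) = r := Fin.snoc_last (α := fun _ => ℝ) r x.ofLp
    have hznorm : ‖z‖^2 = 1 := by
      rw [ESnormsq, Fin.sum_univ_castSucc]
      have h4 : ∑ k : Fin M, (z k.castSucc)^2 = ‖x‖^2 := by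
        rw [ESnormsq]
        exact Finset.sum_congr rfl fun k _ => by rw [hzc k]
      rw [h4, hzl, hr2]
      ring
    refine ⟨z, ⟨?_, ?_⟩, ?_⟩
    · rw [mem_sphere_zero_iff_norm]
      have h5 : ‖z‖ = Real.sqrt (‖z‖^2) := (Real.sqrt_sq (norm_nonneg z)).symm
      rw [h5, hznorm, Real.sqrt_one]
    · rw [hzl, abs_of_nonneg (by linarith : (0:ℝ) ≤ r)]
      exact hrge
    · ext k
      exact hzc k
  have himg := hπ.hausdorffMeasure_image_le (d := (M:ℝ)) (Nat.cast_nonneg M) cap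
  have h0 := hm_closedBall_pos M (1/2) (by norm_num)
  calc (0:ℝ≥0∞) < μH[(M:ℝ)] (Metric.closedBall (0 : EuclideanSpace ℝ (Fin M)) (1/2)) := h0
    _ ≤ μH[(M:ℝ)] (π '' cap) := measure_mono hsub
    _ ≤ μH[(M:ℝ)] cap := by simpa using himg

private lemma sphere_hm_lt_top (M : ℕ) (hM : 1 ≤ M) :
    μH[(M:ℝ)] (Metric.sphere (0 : EuclideanSpace ℝ (Fin (M+1))) 1) < ⊤ := by
  classical
  have hM1 : (0:ℝ) < (M:ℝ)+1 := by positivity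
  set D : Set (EuclideanSpace ℝ (Fin M)) := {x | ‖x‖^2 ≤ 1 - 1/((M:ℝ)+1)} with hD
  set sc : EuclideanSpace ℝ (Fin M) → ℝ := fun x => Real.sqrt (1 - ‖x‖^2) with hsc
  have hDnorm : ∀ x ∈ D, ‖x‖ ≤ 1 := by
    intro x hx
    have h1 : ‖x‖^2 ≤ 1 - 1/((M:ℝ)+1) := hx
    nlinarith [norm_nonneg x, one_div_pos.2 hM1]
  have hDa : ∀ x ∈ D, 1/((M:ℝ)+1) ≤ 1 - ‖x‖^2 := by
    intro x hx
    have h1 : ‖x‖^2 ≤ 1 - 1/((M:ℝ)+1) := hx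
    linarith
  have hsqpos : (0:ℝ) < Real.sqrt ((M:ℝ)+1) := Real.sqrt_pos.2 hM1
  have hscLip : ∀ x ∈ D, ∀ y ∈ D, |sc x - sc y| ≤ Real.sqrt ((M:ℝ)+1) * dist x y := by
    intro x hx y hy
    have ha0 : (0:ℝ) ≤ 1 - ‖x‖^2 := le_trans (by positivity) (hDa x hx)
    have hb0 : (0:ℝ) ≤ 1 - ‖y‖^2 := le_trans (by positivity) (hDa y hy)
    have hsum : 2 / Real.sqrt ((M:ℝ)+1) ≤ sc x + sc y := by
      have h1 : Real.sqrt (1/((M:ℝ)+1)) ≤ sc x := Real.sqrt_le_sqrt (hDa x hx)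
      have h2 : Real.sqrt (1/((M:ℝ)+1)) ≤ sc y := Real.sqrt_le_sqrt (hDa y hy)
      have h3 : Real.sqrt (1/((M:ℝ)+1)) = 1 / Real.sqrt ((M:ℝ)+1) := by
        rw [one_div, one_div, Real.sqrt_inv]
      rw [h3] at h1 h2
      have : 2 / Real.sqrt ((M:ℝ)+1) = 1/Real.sqrt ((M:ℝ)+1) + 1/Real.sqrt ((M:ℝ)+1) := by
        ring
      linarith
    have hprod : |sc x - sc y| * (sc x + sc y) = |(1 - ‖x‖^2) - (1 - ‖y‖^2)| := by
      rw [← abs_of_nonneg (add_nonneg (Real.sqrt_nonneg _) (Real.sqrt_nonneg _) :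
        (0:ℝ) ≤ sc x + sc y), ← abs_mul]
      congr 1
      have e1 := Real.sq_sqrt ha0
      have e2 := Real.sq_sqrt hb0
      simp only [hsc]
      nlinarith [e1, e2]
    have hab : |(1 - ‖x‖^2) - (1 - ‖y‖^2)| ≤ 2 * dist x y := by
      have h1 : |‖y‖ - ‖x‖| ≤ dist x y := by
        rw [dist_eq_norm, ← norm_neg (x - y)]
        simpa [neg_sub] using abs_norm_sub_norm_le y x
      have h2 : (1 - ‖x‖^2) - (1 - ‖y‖^2) = (‖y‖ - ‖x‖) * (‖y‖ + ‖x‖) := by ring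
      rw [h2, abs_mul]
      have h3 : |‖y‖ + ‖x‖| ≤ 2 := by
        rw [abs_of_nonneg (by positivity)]
        have := hDnorm x hx
        have := hDnorm y hy
        linarith
      calc |‖y‖ - ‖x‖| * |‖y‖ + ‖x‖| ≤ dist x y * 2 :=
            mul_le_mul h1 h3 (abs_nonneg _) dist_nonneg
        _ = 2 * dist x y := by ring
    have hne : Real.sqrt ((M:ℝ)+1) ≠ 0 := ne_of_gt hsqpos
    have e1 : |sc x - sc y| * (2 / Real.sqrt ((M:ℝ)+1)) ≤ 2 * dist x y := by
      calc |sc x - sc y| * (2 / Real.sqrt ((M:ℝ)+1))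
          ≤ |sc x - sc y| * (sc x + sc y) :=
            mul_le_mul_of_nonneg_left hsum (abs_nonneg _)
        _ = |(1 - ‖x‖^2) - (1 - ‖y‖^2)| := hprod
        _ ≤ 2 * dist x y := hab
    have e2 := mul_le_mul_of_nonneg_left e1
      (le_of_lt (by positivity : (0:ℝ) < Real.sqrt ((M:ℝ)+1) / 2))
    have e3 : Real.sqrt ((M:ℝ)+1) / 2 * (|sc x - sc y| * (2 / Real.sqrt ((M:ℝ)+1)))
        = |sc x - sc y| := by
      field_simp
    have e4 : Real.sqrt ((M:ℝ)+1) / 2 * (2 * dist x y) = Real.sqrt ((M:ℝ)+1) * dist x y := by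
      ring
    rw [e3, e4] at e2
    exact e2
  set G : Fin (M+1) → ℝ → EuclideanSpace ℝ (Fin M) → EuclideanSpace ℝ (Fin (M+1)) :=
    fun i c x => WithLp.toLp 2 (i.insertNth (c * sc x) x.ofLp : Fin (M+1) → ℝ) with hG
  have hGdist : ∀ (i : Fin (M+1)) (c : ℝ), |c| ≤ 1 → ∀ x ∈ D, ∀ y ∈ D,
      dist (G i c x) (G i c y) ≤ Real.sqrt ((M:ℝ)+2) * dist x y := by
    intro i c hc x hx y hy
    have hsq : dist (G i c x) (G i c y) ^ 2 ≤ ((M:ℝ)+2) * dist x y ^ 2 := by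
      rw [ESdistsq]
      rw [Fin.sum_univ_succAbove (fun j => dist (G i c x j) (G i c y j) ^ 2) i]
      have h1 : G i c x i = c * sc x := Fin.insertNth_apply_same (α := fun _ => ℝ) i (c * sc x) x.ofLp
      have h2 : G i c y i = c * sc y := Fin.insertNth_apply_same (α := fun _ => ℝ) i (c * sc y) y.ofLp
      have h3 : ∀ k : Fin M, G i c x (i.succAbove k) = x k := fun k =>
        Fin.insertNth_apply_succAbove (α := fun _ => ℝ) i (c * sc x) x.ofLp k
      have h4 : ∀ k : Fin M, G i c y (i.succAbove k) = y k := fun k =>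
        Fin.insertNth_apply_succAbove (α := fun _ => ℝ) i (c * sc y) y.ofLp k
      have h5 : ∑ k : Fin M, dist (G i c x (i.succAbove k)) (G i c y (i.succAbove k)) ^ 2
          = dist x y ^ 2 := by
        rw [ESdistsq]
        exact Finset.sum_congr rfl fun k _ => by rw [h3 k, h4 k]
      rw [h5, h1, h2]
      have h6 : dist (c * sc x) (c * sc y) ^ 2 ≤ ((M:ℝ)+1) * dist x y ^ 2 := by
        rw [Real.dist_eq]
        have h7 : |c * sc x - c * sc y| = |c| * |sc x - sc y| := by
          rw [← abs_mul]; congr 1; ring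
        rw [h7]
        have h8 : |c| * |sc x - sc y| ≤ 1 * (Real.sqrt ((M:ℝ)+1) * dist x y) :=
          mul_le_mul hc (hscLip x hx y hy) (abs_nonneg _) zero_le_one
        rw [one_mul] at h8
        have h9 : (|c| * |sc x - sc y|)^2 ≤ (Real.sqrt ((M:ℝ)+1) * dist x y)^2 := by
          apply sq_le_sq' _ h8
          nlinarith [mul_nonneg (abs_nonneg c) (abs_nonneg (sc x - sc y)),
            mul_nonneg (Real.sqrt_nonneg ((M:ℝ)+1)) (dist_nonneg (x := x) (y := y))]
        calc (|c| * |sc x - sc y|)^2 ≤ (Real.sqrt ((M:ℝ)+1) * dist x y)^2 := h9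
          _ = ((M:ℝ)+1) * dist x y ^ 2 := by
              rw [mul_pow, Real.sq_sqrt (by positivity : (0:ℝ) ≤ (M:ℝ)+1)]
      linarith [h6]
    nlinarith [dist_nonneg (x := G i c x) (y := G i c y), dist_nonneg (x := x) (y := y),
      Real.sqrt_nonneg ((M:ℝ)+2), Real.sq_sqrt (by positivity : (0:ℝ) ≤ (M:ℝ)+2),
      mul_nonneg (Real.sqrt_nonneg ((M:ℝ)+2)) (dist_nonneg (x := x) (y := y))]
  have hGlip : ∀ (i : Fin (M+1)) (c : ℝ), |c| ≤ 1 →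
      LipschitzOnWith (Real.toNNReal (Real.sqrt ((M:ℝ)+2))) (G i c) D := by
    intro i c hc
    rw [lipschitzOnWith_iff_dist_le_mul]
    intro x hx y hy
    rw [Real.coe_toNNReal _ (Real.sqrt_nonneg _)]
    exact hGdist i c hc x hx y hy
  have hDsub : D ⊆ Metric.closedBall (0 : EuclideanSpace ℝ (Fin M)) 1 := by
    intro x hx
    rw [Metric.mem_closedBall, dist_zero_right]
    exact hDnorm x hx
  have hDfin : μH[(M:ℝ)] D < ⊤ :=
    lt_of_le_of_lt (measure_mono hDsub) (hm_closedBall_lt_top M 1)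
  have himg : ∀ (i : Fin (M+1)) (c : ℝ), |c| ≤ 1 → μH[(M:ℝ)] (G i c '' D) < ⊤ := by
    intro i c hc
    refine lt_of_le_of_lt ((hGlip i c hc).hausdorffMeasure_image_le (Nat.cast_nonneg M)) ?_
    exact ENNReal.mul_lt_top
      (ENNReal.rpow_lt_top_of_nonneg (Nat.cast_nonneg M) ENNReal.coe_ne_top) hDfin
  have hcover : Metric.sphere (0 : EuclideanSpace ℝ (Fin (M+1))) 1 ⊆
      ⋃ i : Fin (M+1), (G i 1 '' D ∪ G i (-1) '' D) := by
    intro z hz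
    rw [mem_sphere_zero_iff_norm] at hz
    have hzsum : ∑ j, (z j)^2 = 1 := by
      rw [← ESnormsq, hz]; norm_num
    obtain ⟨i, hi⟩ : ∃ i : Fin (M+1), 1/((M:ℝ)+1) ≤ (z i)^2 := by
      by_contra h
      push_neg at h
      have hlt := Finset.sum_lt_sum_of_nonempty (Finset.univ_nonempty) (fun i _ => h i)
      rw [Finset.sum_const, Finset.card_univ, Fintype.card_fin, nsmul_eq_mul] at hlt
      have : ((M:ℕ)+1 : ℝ) * (1/((M:ℝ)+1)) = 1 := by
        push_cast; field_simp
      rw [hzsum] at hlt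
      push_cast at hlt
      rw [this] at hlt
      exact lt_irrefl _ hlt
    set x : EuclideanSpace ℝ (Fin M) := WithLp.toLp 2 (fun k => z (i.succAbove k) : Fin M → ℝ) with hx
    have hxn : ‖x‖^2 = 1 - (z i)^2 := by
      rw [ESnormsq]
      have h1 := Fin.sum_univ_succAbove (fun j => (z j)^2) i
      rw [hzsum] at h1
      have h2 : ∑ k : Fin M, (x k)^2 = ∑ k : Fin M, (z (i.succAbove k))^2 := rfl
      rw [h2]
      linarith
    have hxD : x ∈ D := by
      rw [hD, mem_setOf_eq, hxn]
      linarith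
    have hscx : sc x = |z i| := by
      rw [hsc]
      simp only
      rw [hxn]
      have : 1 - (1 - (z i)^2) = (z i)^2 := by ring
      rw [this, Real.sqrt_sq_eq_abs]
    rw [mem_iUnion]
    rcases le_or_gt 0 (z i) with hpos | hneg
    · refine ⟨i, Or.inl ⟨x, hxD, ?_⟩⟩
      have hval : (1:ℝ) * sc x = z i := by
        rw [one_mul, hscx, abs_of_nonneg hpos]
      show WithLp.toLp 2 (i.insertNth ((1:ℝ) * sc x) x.ofLp : Fin (M+1) → ℝ) = z
      rw [hval]
      exact congrArg (WithLp.toLp 2) (Fin.insertNth_self_removeNth i z.ofLp)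
    · refine ⟨i, Or.inr ⟨x, hxD, ?_⟩⟩
      have hval : (-1:ℝ) * sc x = z i := by
        rw [hscx, abs_of_neg hneg]; ring
      show WithLp.toLp 2 (i.insertNth ((-1:ℝ) * sc x) x.ofLp : Fin (M+1) → ℝ) = z
      rw [hval]
      exact congrArg (WithLp.toLp 2) (Fin.insertNth_self_removeNth i z.ofLp)
  calc μH[(M:ℝ)] (Metric.sphere (0 : EuclideanSpace ℝ (Fin (M+1))) 1)
      ≤ μH[(M:ℝ)] (⋃ i : Fin (M+1), (G i 1 '' D ∪ G i (-1) '' D)) := measure_mono hcover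
    _ ≤ ∑' i : Fin (M+1), μH[(M:ℝ)] (G i 1 '' D ∪ G i (-1) '' D) := measure_iUnion_le _
    _ < ⊤ := by
        rw [tsum_fintype]
        refine ENNReal.sum_lt_top.2 fun i _ => ?_
        refine lt_of_le_of_lt (measure_union_le _ _) ?_
        exact ENNReal.add_lt_top.2 ⟨himg i 1 (by norm_num), himg i (-1) (by norm_num)⟩

theorem stmt12
    (N : ℕ) (hN : 2 ≤ N)
    (φ : ℝ → ℝ)
    (hφpos : ∀ t : ℝ, 0 < t → 0 < φ t)
    (hφmono : StrictMonoOn (fun t => t * φ t) (Set.Ioi (0:ℝ)))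
    (hφ0 : Tendsto (fun t => t * φ t) (nhdsWithin 0 (Set.Ioi 0)) (nhds 0))
    (hφtop : Tendsto (fun t => t * φ t) atTop atTop)
    (Φ : ℝ → ℝ)
    (hΦ : ∀ t : ℝ, Φ t = ∫ τ in (0:ℝ)..|t|, τ * φ τ)
    (hΔ2 : ∃ K : ℝ, 1 < K ∧ ∀ t : ℝ, 0 ≤ t → Φ (2 * t) ≤ K * Φ t)
    (Ψ : ℝ → ℝ)
    (hΨ : ∀ t : ℝ, Ψ t = ∫ ρ in (0:ℝ)..|t|,
        (∫ z in Metric.sphere (0 : EuclideanSpace ℝ (Fin N)) 1,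
            Φ (ρ * |z ⟨N - 1, by omega⟩|) ∂(μH[(N:ℝ) - 1])) / ρ) :
    ∃ k₁ k₂ : ℝ, 0 < k₁ ∧ 0 < k₂ ∧
      ∀ t : ℝ, 0 < t → k₁ * Φ t ≤ Ψ t ∧ Ψ t ≤ k₂ * Φ t := by
  obtain ⟨M, rfl⟩ : ∃ M, N = M + 1 := ⟨N - 1, by omega⟩
  have hM : 1 ≤ M := by omega
  obtain ⟨K, hK1, hK⟩ := hΔ2
  have hK0 : (0:ℝ) < K := lt_trans one_pos hK1
  set E := EuclideanSpace ℝ (Fin (M+1))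
  have hexp : ((M+1:ℕ):ℝ) - 1 = (M:ℝ) := by push_cast; ring
  simp only [hexp] at hΨ
  set μ : Measure E := μH[(M:ℝ)] with hμ
  -- the modified integrand
  set f' : ℝ → ℝ := fun t => if t ≤ 0 then 0 else t * φ t with hf'
  have hf'nonneg : ∀ t, 0 ≤ f' t := by
    intro t
    by_cases h : t ≤ 0
    · simp [hf', h]
    · push_neg at h
      simp only [hf', if_neg (not_le.2 h)]
      exact le_of_lt (mul_pos h (hφpos t h))
  have hf'pos : ∀ t, 0 < t → 0 < f' t := by
    intro t ht
    simp only [hf', if_neg (not_le.2 ht)]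
    exact mul_pos ht (hφpos t ht)
  have hf'mono : Monotone f' := by
    intro a b hab
    by_cases ha : a ≤ 0
    · simp only [hf', if_pos ha]
      exact hf'nonneg b
    · push_neg at ha
      have hb : ¬ b ≤ 0 := by push_neg; linarith
      simp only [hf', if_neg (not_le.2 ha), if_neg hb]
      rcases eq_or_lt_of_le hab with rfl | h
      · exact le_rfl
      · exact le_of_lt (hφmono (mem_Ioi.2 ha) (mem_Ioi.2 (lt_trans ha h)) h)
  have hf'int : ∀ a b : ℝ, IntervalIntegrable f' volume a b := fun a b =>
    hf'mono.intervalIntegrable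
  have hΦ' : ∀ t : ℝ, Φ t = ∫ τ in (0:ℝ)..|t|, f' τ := by
    intro t
    rw [hΦ t]
    apply intervalIntegral.integral_congr
    intro τ hτ
    rw [uIcc_of_le (abs_nonneg t)] at hτ
    by_cases h : τ ≤ 0
    · have : τ = 0 := le_antisymm h hτ.1
      simp [hf', this]
    · simp [hf', h]
  have hΦ0 : Φ 0 = 0 := by simp [hΦ' 0]
  have hΦnonneg : ∀ t, 0 ≤ Φ t := by
    intro t
    rw [hΦ' t]
    exact intervalIntegral.integral_nonneg (abs_nonneg t) (fun x _ => hf'nonneg x)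
  have hΦmono : MonotoneOn Φ (Ici (0:ℝ)) := by
    intro a ha b hb hab
    rw [hΦ' a, hΦ' b, abs_of_nonneg ha, abs_of_nonneg hb,
      ← intervalIntegral.integral_add_adjacent_intervals (hf'int 0 a) (hf'int a b)]
    have : 0 ≤ ∫ τ in a..b, f' τ :=
      intervalIntegral.integral_nonneg hab (fun x _ => hf'nonneg x)
    linarith
  have hΦpos : ∀ t : ℝ, 0 < t → 0 < Φ t := by
    intro t ht
    rw [hΦ' t, abs_of_nonneg ht.le]
    exact intervalIntegral.intervalIntegral_pos_of_pos_on (hf'int 0 t)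
      (fun x hx => hf'pos x hx.1) ht
  have hΦcont : Continuous Φ := by
    have h1 : Continuous fun t : ℝ => ∫ τ in (0:ℝ)..t, f' τ :=
      intervalIntegral.continuous_primitive (fun a b => hf'int a b) 0
    have : Φ = fun t => ∫ τ in (0:ℝ)..|t|, f' τ := funext hΦ'
    rw [this]
    exact h1.comp continuous_abs
  have hΦle : ∀ ρ : ℝ, 0 ≤ ρ → Φ ρ ≤ ρ * f' ρ := by
    intro ρ hρ
    rw [hΦ' ρ, abs_of_nonneg hρ]
    calc ∫ τ in (0:ℝ)..ρ, f' τ ≤ ∫ _ in (0:ℝ)..ρ, f' ρ := by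
          apply intervalIntegral.integral_mono_on hρ (hf'int 0 ρ)
            intervalIntegrable_const
          intro x hx
          exact hf'mono hx.2
      _ = ρ * f' ρ := by simp [smul_eq_mul]
  -- Δ₂ iterated
  have hΔ4 : ∀ t : ℝ, 0 ≤ t → Φ t ≤ K^2 * Φ (t/4) := by
    intro t ht
    have h1 : Φ t ≤ K * Φ (t/2) := by
      have := hK (t/2) (by linarith)
      have h2 : 2 * (t/2) = t := by ring
      rwa [h2] at this
    have h2 : Φ (t/2) ≤ K * Φ (t/4) := by
      have := hK (t/4) (by linarith)
      have h3 : 2 * (t/4) = t/2 := by ring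
      rwa [h3] at this
    nlinarith [hΦnonneg (t/2)]
  -- sphere setup
  set SS := Metric.sphere (0 : E) 1 with hSS
  have hlast : (⟨M + 1 - 1, by omega⟩ : Fin (M+1)) = Fin.last M := rfl
  have hsphfin : μ SS < ⊤ := sphere_hm_lt_top M hM
  have hSSmeas : MeasurableSet SS := Metric.isClosed_sphere.measurableSet
  set cap : Set E := {z : E | z ∈ SS ∧ 1/2 ≤ |z (Fin.last M)|} with hcap
  have hcapmeas : MeasurableSet cap := by
    apply IsClosed.measurableSet
    apply IsClosed.inter (Metric.isClosed_sphere)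
    have hc : Continuous fun z : E => |z (Fin.last M)| :=
      ((EuclideanSpace.proj (𝕜 := ℝ) (Fin.last M)).continuous).abs
    exact isClosed_le continuous_const hc
  have hcapsub : cap ⊆ SS := fun z hz => hz.1
  have hcappos : 0 < μ cap := cap_hm_pos M hM
  have hcapfin : μ cap < ⊤ := lt_of_le_of_lt (measure_mono hcapsub) hsphfin
  set m : ℝ := (μ cap).toReal with hm
  set σ : ℝ := (μ SS).toReal with hσ
  have hmpos : 0 < m := ENNReal.toReal_pos hcappos.ne' hcapfin.ne
  have hσm : m ≤ σ := ENNReal.toReal_mono hsphfin.ne (measure_mono hcapsub)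
  have hσpos : 0 < σ := lt_of_lt_of_le hmpos hσm
  haveI : IsFiniteMeasure (μ.restrict SS) :=
    ⟨by rw [Measure.restrict_apply_univ]; exact hsphfin⟩
  -- coordinate bound
  have hcoord : ∀ z : E, z ∈ SS → |z (Fin.last M)| ≤ 1 := by
    intro z hz
    have h1 : ‖z‖ = 1 := by
      rwa [Metric.mem_sphere, dist_zero_right] at hz
    have h2 : |z (Fin.last M)| ≤ ‖z‖ := by
      rw [EuclideanSpace.norm_eq]
      have : |z (Fin.last M)| = Real.sqrt (‖z (Fin.last M)‖^2) := by
        rw [Real.norm_eq_abs, Real.sqrt_sq_eq_abs, abs_abs]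
      rw [this]
      apply Real.sqrt_le_sqrt
      apply Finset.single_le_sum (f := fun i => ‖z i‖^2) (fun i _ => sq_nonneg _)
        (Finset.mem_univ _)
    linarith
  -- inner integral
  set g : ℝ → E → ℝ := fun ρ z => Φ (ρ * |z (Fin.last M)|) with hg
  have hgcont : ∀ ρ, Continuous (g ρ) := by
    intro ρ
    exact hΦcont.comp (continuous_const.mul
      ((EuclideanSpace.proj (𝕜 := ℝ) (Fin.last M)).continuous.abs))
  have hgnonneg : ∀ ρ z, 0 ≤ g ρ z := fun ρ z => hΦnonneg _
  have hgint : ∀ ρ : ℝ, 0 ≤ ρ → Integrable (g ρ) (μ.restrict SS) := by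
    intro ρ hρ
    refine ⟨(hgcont ρ).aestronglyMeasurable, ?_⟩
    apply HasFiniteIntegral.of_bounded (C := Φ ρ)
    rw [ae_restrict_iff' hSSmeas]
    apply ae_of_all
    intro z hz
    rw [Real.norm_eq_abs, abs_of_nonneg (hgnonneg ρ z)]
    apply hΦmono (mem_Ici.2 (mul_nonneg hρ (abs_nonneg _))) (mem_Ici.2 hρ)
    calc ρ * |z (Fin.last M)| ≤ ρ * 1 := by
          apply mul_le_mul_of_nonneg_left (hcoord z hz) hρ
      _ = ρ := mul_one ρ
  set H : ℝ → ℝ := fun ρ => ∫ z in SS, g ρ z ∂μ with hH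
  have hHnonneg : ∀ ρ, 0 ≤ H ρ := fun ρ => integral_nonneg (fun z => hgnonneg ρ z)
  have hHmono : MonotoneOn H (Ici (0:ℝ)) := by
    intro a ha b hb hab
    apply integral_mono (hgint a ha) (hgint b hb)
    intro z
    apply hΦmono (mem_Ici.2 (mul_nonneg ha (abs_nonneg _)))
      (mem_Ici.2 (mul_nonneg hb (abs_nonneg _)))
    exact mul_le_mul_of_nonneg_right hab (abs_nonneg _)
  have hHub : ∀ ρ : ℝ, 0 ≤ ρ → H ρ ≤ σ * Φ ρ := by
    intro ρ hρ
    have h1 : H ρ ≤ ∫ _z in SS, Φ ρ ∂μ := by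
      apply integral_mono_ae (hgint ρ hρ) (integrable_const _)
      have hb : ∀ z ∈ SS, g ρ z ≤ Φ ρ := by
        intro z hz
        apply hΦmono (mem_Ici.2 (mul_nonneg hρ (abs_nonneg _))) (mem_Ici.2 hρ)
        calc ρ * |z (Fin.last M)| ≤ ρ * 1 :=
              mul_le_mul_of_nonneg_left (hcoord z hz) hρ
          _ = ρ := mul_one ρ
      exact (ae_restrict_iff' hSSmeas).2 (ae_of_all _ hb)
    rw [setIntegral_const, smul_eq_mul] at h1
    exact h1
  have hHlb : ∀ ρ : ℝ, 0 ≤ ρ → m * Φ (ρ/2) ≤ H ρ := by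
    intro ρ hρ
    have h1 : ∫ z in cap, g ρ z ∂μ ≤ H ρ := by
      apply setIntegral_mono_set (hgint ρ hρ)
      · exact ae_of_all _ (fun z => hgnonneg ρ z)
      · exact HasSubset.Subset.eventuallyLE hcapsub
    have h2 : Φ (ρ/2) * m ≤ ∫ z in cap, g ρ z ∂μ := by
      apply setIntegral_ge_of_const_le_real hcapmeas hcapfin.ne
      · intro z hz
        apply hΦmono (mem_Ici.2 (by linarith)) (mem_Ici.2 (mul_nonneg hρ (abs_nonneg _)))
        calc ρ/2 = ρ * (1/2) := by ring
          _ ≤ ρ * |z (Fin.last M)| := mul_le_mul_of_nonneg_left hz.2 hρ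
      · exact (hgint ρ hρ).mono_measure (Measure.restrict_mono hcapsub le_rfl)
    linarith
  -- outer integrand
  set q : ℝ → ℝ := fun ρ => H ρ / ρ with hq
  have hqmeas : ∀ t : ℝ, 0 < t → AEStronglyMeasurable q (volume.restrict (Ioc 0 t)) := by
    intro t ht
    have hmono : Monotone (fun u => H (Real.exp u)) := by
      intro a b hab
      exact hHmono (mem_Ici.2 (Real.exp_pos a).le) (mem_Ici.2 (Real.exp_pos b).le)
        (Real.exp_le_exp.2 hab)
    have hmeas : Measurable fun ρ : ℝ => H (Real.exp (Real.log ρ)) / ρ :=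
      (hmono.measurable.comp Real.measurable_log).div measurable_id
    apply hmeas.aestronglyMeasurable.congr
    rw [Filter.EventuallyEq, ae_restrict_iff' measurableSet_Ioc]
    apply ae_of_all
    intro ρ hρ
    simp only [Real.exp_log hρ.1]
    rfl
  have hqnonneg : ∀ ρ : ℝ, 0 ≤ ρ → 0 ≤ q ρ := by
    intro ρ h
    exact div_nonneg (hHnonneg ρ) h
  have hqint : ∀ t : ℝ, 0 < t → IntervalIntegrable q volume 0 t := by
    intro t ht
    rw [intervalIntegrable_iff_integrableOn_Ioc_of_le ht.le]
    haveI : IsFiniteMeasure (volume.restrict (Ioc (0:ℝ) t)) :=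
      ⟨by rw [Measure.restrict_apply_univ]; exact measure_Ioc_lt_top⟩
    refine ⟨hqmeas t ht, ?_⟩
    apply HasFiniteIntegral.of_bounded (C := σ * f' t)
    rw [ae_restrict_iff' measurableSet_Ioc]
    apply ae_of_all
    intro ρ hρ
    rw [Real.norm_eq_abs, abs_of_nonneg (hqnonneg ρ hρ.1.le)]
    show H ρ / ρ ≤ σ * f' t
    rw [div_le_iff₀ hρ.1]
    have e1 : H ρ ≤ σ * Φ ρ := hHub ρ hρ.1.le
    have e2 : Φ ρ ≤ ρ * f' ρ := hΦle ρ hρ.1.le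
    have e3 : f' ρ ≤ f' t := hf'mono hρ.2
    have c2 : σ * Φ ρ ≤ σ * (ρ * f' ρ) := mul_le_mul_of_nonneg_left e2 hσpos.le
    have c3 : (σ * ρ) * f' ρ ≤ (σ * ρ) * f' t :=
      mul_le_mul_of_nonneg_left e3 (mul_nonneg hσpos.le hρ.1.le)
    nlinarith [c2, c3, e1]
  have hk2 : (0:ℝ) < 2 * K^2 := by nlinarith
  refine ⟨m / (2 * K^2), σ, div_pos hmpos hk2, hσpos, ?_⟩
  intro t ht
  have habs : |t| = t := abs_of_pos ht
  have hΨt : Ψ t = ∫ ρ in (0:ℝ)..t, q ρ := by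
    rw [hΨ t, habs]
    rfl
  constructor
  · -- lower bound
    have hsub1 : uIcc (0:ℝ) (t/2) ⊆ uIcc (0:ℝ) t := by
      rw [uIcc_of_le (by linarith : (0:ℝ) ≤ t/2), uIcc_of_le ht.le]
      exact Icc_subset_Icc le_rfl (by linarith)
    have hsub2 : uIcc (t/2) t ⊆ uIcc (0:ℝ) t := by
      rw [uIcc_of_le (by linarith : t/2 ≤ t), uIcc_of_le ht.le]
      exact Icc_subset_Icc (by linarith) le_rfl
    have hq1 : IntervalIntegrable q volume 0 (t/2) := (hqint t ht).mono_set hsub1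
    have hq2 : IntervalIntegrable q volume (t/2) t := (hqint t ht).mono_set hsub2
    have hsplit : Ψ t = (∫ ρ in (0:ℝ)..(t/2), q ρ) + ∫ ρ in (t/2)..t, q ρ := by
      rw [hΨt, ← intervalIntegral.integral_add_adjacent_intervals hq1 hq2]
    have h1 : 0 ≤ ∫ ρ in (0:ℝ)..(t/2), q ρ :=
      intervalIntegral.integral_nonneg (by linarith) (fun ρ hρ => hqnonneg ρ hρ.1)
    have h2 : ∫ _ρ in (t/2)..t, (m * Φ (t/4) / t) ≤ ∫ ρ in (t/2)..t, q ρ := by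
      apply intervalIntegral.integral_mono_on (by linarith) intervalIntegrable_const hq2
      intro ρ hρ
      have hρ0 : 0 < ρ := by linarith [hρ.1]
      show m * Φ (t/4) / t ≤ H ρ / ρ
      rw [div_le_div_iff₀ ht hρ0]
      have e1 : m * Φ (ρ/2) ≤ H ρ := hHlb ρ hρ0.le
      have e2 : Φ (t/4) ≤ Φ (ρ/2) :=
        hΦmono (mem_Ici.2 (by linarith)) (mem_Ici.2 (by linarith)) (by linarith [hρ.1])
      have c1 : m * Φ (t/4) ≤ H ρ :=
        le_trans (mul_le_mul_of_nonneg_left e2 hmpos.le) e1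
      have c2 : m * Φ (t/4) * ρ ≤ H ρ * ρ := mul_le_mul_of_nonneg_right c1 hρ0.le
      have c3 : H ρ * ρ ≤ H ρ * t := mul_le_mul_of_nonneg_left hρ.2 (hHnonneg ρ)
      linarith
    have h3 : ∫ _ρ in (t/2)..t, (m * Φ (t/4) / t) = m * Φ (t/4) / 2 := by
      rw [intervalIntegral.integral_const, smul_eq_mul]
      field_simp
      ring
    have h4 : Φ t ≤ K^2 * Φ (t/4) := hΔ4 t ht.le
    have h5 : m / (2 * K^2) * Φ t ≤ m / (2 * K^2) * (K^2 * Φ (t/4)) :=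
      mul_le_mul_of_nonneg_left h4 (le_of_lt (div_pos hmpos hk2))
    have h6 : m / (2 * K^2) * (K^2 * Φ (t/4)) = m * Φ (t/4) / 2 := by
      field_simp
    linarith
  · -- upper bound
    rw [hΨt]
    have h2 : ∫ ρ in (0:ℝ)..t, q ρ ≤ ∫ ρ in (0:ℝ)..t, σ * f' ρ := by
      apply intervalIntegral.integral_mono_on ht.le (hqint t ht)
        ((hf'int 0 t).const_mul σ)
      intro ρ hρ
      rcases eq_or_lt_of_le hρ.1 with rfl | hρ0
      · show H 0 / 0 ≤ σ * f' 0
        rw [div_zero]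
        exact mul_nonneg hσpos.le (hf'nonneg 0)
      · show H ρ / ρ ≤ σ * f' ρ
        rw [div_le_iff₀ hρ0]
        have e1 : H ρ ≤ σ * Φ ρ := hHub ρ hρ0.le
        have e2 : Φ ρ ≤ ρ * f' ρ := hΦle ρ hρ0.le
        have c2 : σ * Φ ρ ≤ σ * (ρ * f' ρ) := mul_le_mul_of_nonneg_left e2 hσpos.le
        nlinarith [c2, e1]
    have h3 : ∫ ρ in (0:ℝ)..t, σ * f' ρ = σ * Φ t := by
      rw [intervalIntegral.integral_const_mul, hΦ' t, habs]
    linarith
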